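/- Let H₁, H₂ : ℝ² → ℝ be real-analytic functions such that y₂·H₁(y₁,y₂) = y₁·H₂(y₁,y₂) for all (y₁,y₂) ∈ ℝ². Then there exists a real-analytic function H̃ : ℝ² → ℝ such that H₁(y₁,y₂) = y₁·H̃(y₁,y₂) and H₂(y₁,y₂) = y₂·H̃(y₁,y₂) for all (y₁,y₂) ∈ ℝ². -/

import Mathlib

open scoped Topology ENNReal NNReal
set_option maxHeartbeats 1000000
noncomputable section

abbrev E2 : Type := ℝ × ℝ

def P2 : E2 →L[ℝ] E2 := (ContinuousLinearMap.inr ℝ ℝ ℝ).comp (ContinuousLinearMap.snd ℝ ℝ ℝ)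

lemma P2_apply (y : E2) : P2 y = (0, y.2) := rfl

lemma P2_norm_le : ‖P2‖ ≤ 1 := by
  refine ContinuousLinearMap.opNorm_le_bound _ zero_le_one fun y => ?_
  rw [P2_apply, one_mul]
  simpa [Prod.norm_def] using norm_snd_le y

def e1 : E2 := (1, 0)

lemma e1_norm : ‖e1‖ = 1 := by simp [e1, Prod.norm_def]

def Tmap (n : ℕ) (m : ContinuousMultilinearMap ℝ (fun _ : Fin (n+1) => E2) ℝ) (i : Fin (n+1)) :
    ContinuousMultilinearMap ℝ (fun _ : Fin n => E2) ℝ :=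
  ((m.domDomCongr (Equiv.swap 0 i)).curryLeft e1).compContinuousLinearMap
    (fun k => if (k : ℕ) < (i : ℕ) then P2 else ContinuousLinearMap.id ℝ E2)

lemma Tmap_norm_le (n : ℕ) (m : ContinuousMultilinearMap ℝ (fun _ : Fin (n+1) => E2) ℝ)
    (i : Fin (n+1)) : ‖Tmap n m i‖ ≤ ‖m‖ := by
  refine (ContinuousMultilinearMap.norm_compContinuousLinearMap_le _ _).trans ?_
  have h1 : ∏ k : Fin n, ‖(if (k : ℕ) < (i : ℕ) then P2 else ContinuousLinearMap.id ℝ E2)‖ ≤ 1 := by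
    refine Finset.prod_le_one (fun k _ => norm_nonneg _) fun k _ => ?_
    split
    · exact P2_norm_le
    · exact ContinuousLinearMap.norm_id_le
  have h2 : ‖(m.domDomCongr (Equiv.swap 0 i)).curryLeft e1‖ ≤ ‖m‖ := by
    refine (ContinuousLinearMap.le_opNorm _ _).trans ?_
    rw [ContinuousMultilinearMap.curryLeft_norm, e1_norm, mul_one,
      ContinuousMultilinearMap.norm_domDomCongr]
  calc ‖(m.domDomCongr (Equiv.swap 0 i)).curryLeft e1‖ * ∏ k : Fin n, ‖_‖ ≤ ‖m‖ * 1 :=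
        mul_le_mul h2 h1 (Finset.prod_nonneg fun k _ => norm_nonneg _) (norm_nonneg _)
    _ = ‖m‖ := mul_one _

lemma Tmap_apply_diag (n : ℕ) (m : ContinuousMultilinearMap ℝ (fun _ : Fin (n+1) => E2) ℝ)
    (i : Fin (n+1)) (y : E2) :
    Tmap n m i (fun _ => y) =
      m (Function.update (fun j : Fin (n+1) => if (j : ℕ) < (i : ℕ) then P2 y else y) i e1) := by
  have hcons : ∀ (w : Fin n → E2) (k : Fin (n+1)) (hk : k ≠ 0),
      Fin.cons (α := fun _ : Fin (n+1) => E2) e1 w k = w (k.pred hk) := by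
    intro w k
    induction k using Fin.cases with
    | zero => intro hk; exact absurd rfl hk
    | succ j => intro hk; rw [Fin.cons_succ, Fin.pred_succ]
  rw [Tmap, ContinuousMultilinearMap.compContinuousLinearMap_apply,
    ContinuousMultilinearMap.curryLeft_apply, ContinuousMultilinearMap.domDomCongr_apply]
  congr 1
  funext j
  rcases eq_or_ne j i with rfl | hji
  · rw [Equiv.swap_apply_right, Fin.cons_zero, Function.update_self]
  · rw [Function.update_of_ne hji]
    have hvne : (j : ℕ) ≠ (i : ℕ) := fun h => hji (Fin.val_injective h)
    rcases eq_or_ne j 0 with rfl | hj0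
    · have hi0 : i ≠ 0 := fun h => hji h.symm
      have hipos : 0 < (i : ℕ) := by
        rcases Nat.eq_zero_or_pos (i : ℕ) with h | h
        · exact absurd (Fin.val_injective (h.trans (Fin.val_zero _).symm) : i = 0) hi0
        · exact h
      rw [Equiv.swap_apply_left, hcons _ i hi0]
      simp only [Fin.coe_pred, Fin.val_zero]
      rw [if_pos (by omega)]; exact (if_pos hipos).symm
    · rw [Equiv.swap_apply_of_ne_of_ne hj0 hji, hcons _ j hj0]
      have hjpos : 0 < (j : ℕ) := by
        rcases Nat.eq_zero_or_pos (j : ℕ) with h | h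
        · exact absurd (Fin.val_injective (h.trans (Fin.val_zero _).symm) : j = 0) hj0
        · exact h
      simp only [Fin.coe_pred]
      by_cases hc : (j : ℕ) < (i : ℕ)
      · rw [if_pos (by omega), if_pos hc]
      · rw [if_neg (by omega), if_neg hc]
        rfl

lemma telescope (n : ℕ) (m : ContinuousMultilinearMap ℝ (fun _ : Fin (n+1) => E2) ℝ) (y : E2) :
    m (fun _ => y) - m (fun _ => P2 y)
      = y.1 * ∑ i : Fin (n+1), Tmap n m i (fun _ => y) := by
  set b : ℕ → Fin (n+1) → E2 := fun i j => if (j : ℕ) < i then P2 y else y with hb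
  have hb0 : b 0 = fun _ => y := by funext j; simp [hb]
  have hbtop : b (n+1) = fun _ => P2 y := by
    funext j; simp [hb, j.isLt]
  have hstep : ∀ i : Fin (n+1), m (b i) - m (b ((i : ℕ) + 1)) = y.1 * Tmap n m i (fun _ => y) := by
    intro i
    have h1 : b (i : ℕ) = Function.update (b (i : ℕ)) i y := by
      funext j
      rcases eq_or_ne j i with rfl | hj
      · rw [Function.update_self]; simp [hb]
      · rw [Function.update_of_ne hj]
    have h2 : b ((i : ℕ) + 1) = Function.update (b (i : ℕ)) i (P2 y) := by
      funext j
      rcases eq_or_ne j i with rfl | hj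
      · rw [Function.update_self]; simp [hb]
      · rw [Function.update_of_ne hj]
        have hvne : (j : ℕ) ≠ (i : ℕ) := fun h => hj (Fin.val_injective h)
        simp only [hb]
        by_cases hc : (j : ℕ) < (i : ℕ)
        · rw [if_pos (by omega), if_pos hc]
        · rw [if_neg (by omega), if_neg hc]
    have hsub : y - P2 y = y.1 • e1 := by
      ext <;> simp [P2_apply, e1]
    calc m (b (i : ℕ)) - m (b ((i : ℕ) + 1))
        = m (Function.update (b (i : ℕ)) i y) - m (Function.update (b (i : ℕ)) i (P2 y)) := by
          rw [← h1, ← h2]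
      _ = m (Function.update (b (i : ℕ)) i (y - P2 y)) := by
          rw [ContinuousMultilinearMap.map_update_sub]
      _ = y.1 • m (Function.update (b (i : ℕ)) i e1) := by
          rw [hsub, ContinuousMultilinearMap.map_update_smul]
      _ = y.1 * Tmap n m i (fun _ => y) := by
          rw [Tmap_apply_diag, smul_eq_mul]
  have htel : ∑ i ∈ Finset.range (n+1), (m (b i) - m (b (i+1))) = m (b 0) - m (b (n+1)) :=
    Finset.sum_range_sub' (fun i => m (b i)) (n+1)
  rw [hb0, hbtop] at htel
  rw [← htel, Finset.sum_range (fun i => m (b i) - m (b (i+1))), Finset.mul_sum]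
  exact Finset.sum_congr rfl fun i _ => hstep i

lemma key (G : E2 → ℝ) (hG : AnalyticAt ℝ G 0) (h0 : ∀ y : E2, y.1 = 0 → G y = 0) :
    ∃ (S : E2 → ℝ) (ε : ℝ), 0 < ε ∧ (∀ y ∈ Metric.ball (0 : E2) ε, AnalyticAt ℝ S y) ∧
      ∀ y ∈ Metric.ball (0 : E2) ε, G y = y.1 * S y := by
  obtain ⟨p, r, hr⟩ := hG
  set q : FormalMultilinearSeries ℝ E2 ℝ := fun n => ∑ i : Fin (n+1), Tmap n (p (n+1)) i with hq
  have hqapp : ∀ (n : ℕ) (y : E2),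
      q n (fun _ => y) = ∑ i : Fin (n+1), Tmap n (p (n+1)) i (fun _ => y) := by
    intro n y
    rw [hq]
    simp only [ContinuousMultilinearMap.sum_apply]
  have hqn : ∀ n, ‖q n‖ ≤ ((n : ℝ) + 1) * ‖p (n+1)‖ := by
    intro n
    refine (norm_sum_le _ _).trans ?_
    calc ∑ i : Fin (n+1), ‖Tmap n (p (n+1)) i‖ ≤ ∑ _i : Fin (n+1), ‖p (n+1)‖ :=
          Finset.sum_le_sum fun i _ => Tmap_norm_le _ _ _
      _ = ((n : ℝ) + 1) * ‖p (n+1)‖ := by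
          rw [Finset.sum_const, Finset.card_univ, Fintype.card_fin, nsmul_eq_mul]
          push_cast; ring
  -- radius of q is positive
  have hppos : (0 : ℝ≥0∞) < p.radius := hr.r_pos.trans_le hr.r_le
  obtain ⟨r₀, hr₀pos, hr₀⟩ := ENNReal.lt_iff_exists_nnreal_btwn.1 hppos
  rw [ENNReal.coe_pos] at hr₀pos
  obtain ⟨C, hCpos, hC⟩ := p.norm_mul_pow_le_of_lt_radius hr₀
  set R : ℝ := (r₀ : ℝ) with hR
  have hRpos : 0 < R := hr₀pos
  have hbound : ∀ n, ‖q n‖ * ((r₀ / 2 : ℝ≥0) : ℝ) ^ n ≤ C / R := by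
    intro n
    have hcoe : ((r₀ / 2 : ℝ≥0) : ℝ) = R / 2 := by
      rw [NNReal.coe_div]; norm_num; rfl
    rw [hcoe]
    have hn2 : ((n : ℝ) + 1) ≤ 2 ^ n := by
      have := Nat.lt_two_pow_self (n := n)
      exact_mod_cast this
    have hpn := hC (n+1)
    have h1 : ‖q n‖ * (R/2)^n ≤ ((n : ℝ)+1) * ‖p (n+1)‖ * (R/2)^n :=
      mul_le_mul_of_nonneg_right (hqn n) (by positivity)
    have h2 : ((n : ℝ)+1) * ‖p (n+1)‖ * (R/2)^n ≤ 2^n * ‖p (n+1)‖ * (R/2)^n :=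
      mul_le_mul_of_nonneg_right
        (mul_le_mul_of_nonneg_right hn2 (norm_nonneg _)) (by positivity)
    have h3 : (2:ℝ)^n * ‖p (n+1)‖ * (R/2)^n = ‖p (n+1)‖ * R^n := by
      rw [div_pow]
      field_simp
    have h4 : ‖p (n+1)‖ * R^n ≤ C / R := by
      rw [le_div_iff₀ hRpos]
      calc ‖p (n+1)‖ * R^n * R = ‖p (n+1)‖ * R^(n+1) := by ring
        _ ≤ C := hpn
    linarith
  have hqrad : ((r₀ / 2 : ℝ≥0) : ℝ≥0∞) ≤ q.radius := q.le_radius_of_bound (C / R) hbound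
  have ht0 : (0 : ℝ≥0∞) < ((r₀ / 2 : ℝ≥0) : ℝ≥0∞) := by
    rw [ENNReal.coe_pos]
    positivity
  have hqpos : 0 < q.radius := ht0.trans_le hqrad
  -- the identity on a small ball
  set ρ : ℝ≥0∞ := min r ((r₀ / 2 : ℝ≥0) : ℝ≥0∞) with hρ
  have hρpos : 0 < ρ := lt_min hr.r_pos ht0
  have hkey : ∀ y : E2, (‖y‖₊ : ℝ≥0∞) < ρ → G y = y.1 * q.sum y := by
    intro y hy
    have hyr : y ∈ Metric.eball (0 : E2) r := by
      rw [mem_emetric_ball_zero_iff]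
      exact hy.trans_le (min_le_left _ _)
    have h1 : HasSum (fun n => p n fun _ => y) (G y) := by
      have := hr.hasSum hyr
      rwa [zero_add] at this
    have hP2le : (‖P2 y‖₊ : ℝ≥0∞) ≤ (‖y‖₊ : ℝ≥0∞) := by
      rw [ENNReal.coe_le_coe, ← NNReal.coe_le_coe, coe_nnnorm, coe_nnnorm]
      calc ‖P2 y‖ ≤ ‖P2‖ * ‖y‖ := P2.le_opNorm y
        _ ≤ 1 * ‖y‖ := mul_le_mul_of_nonneg_right P2_norm_le (norm_nonneg _)
        _ = ‖y‖ := one_mul _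
    have hyP2 : P2 y ∈ Metric.eball (0 : E2) r := by
      rw [mem_emetric_ball_zero_iff]
      exact (hP2le.trans_lt hy).trans_le (min_le_left _ _)
    have h2 : HasSum (fun n => p n fun _ => P2 y) 0 := by
      have := hr.hasSum hyP2
      rwa [zero_add, h0 (P2 y) rfl] at this
    have h3 : HasSum (fun n => p n (fun _ => y) - p n (fun _ => P2 y)) (G y) := by
      have := h1.sub h2
      rwa [sub_zero] at this
    have f0 : p 0 (fun _ => y) - p 0 (fun _ => P2 y) = 0 := by
      have he : (fun _ : Fin 0 => y) = (fun _ : Fin 0 => P2 y) := funext fun i => i.elim0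
      rw [he, sub_self]
    have h4 : HasSum (fun n => p (n+1) (fun _ => y) - p (n+1) (fun _ => P2 y)) (G y) := by
      refine (hasSum_nat_add_iff (f := fun n => p n (fun _ => y) - p n (fun _ => P2 y)) 1).2 ?_
      rwa [Finset.sum_range_one, f0, add_zero]
    have hterm : ∀ n, p (n+1) (fun _ => y) - p (n+1) (fun _ => P2 y)
        = y.1 * q n (fun _ => y) := by
      intro n
      rw [telescope n (p (n+1)) y, hqapp]
    have h5 : HasSum (fun n => y.1 * q n (fun _ => y)) (G y) := by
      simpa only [hterm] using h4
    have h6 : HasSum (fun n => q n fun _ => y) (q.sum y) := by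
      refine q.hasSum ?_
      rw [mem_emetric_ball_zero_iff]
      exact (hy.trans_le (min_le_right _ _)).trans_le hqrad
    exact h5.unique (h6.mul_left y.1)
  -- choose a real radius
  obtain ⟨ε, hε0, hερ⟩ := ENNReal.lt_iff_exists_nnreal_btwn.1 hρpos
  rw [ENNReal.coe_pos] at hε0
  refine ⟨q.sum, (ε : ℝ), hε0, ?_, ?_⟩
  · intro y hy
    refine (q.hasFPowerSeriesOnBall hqpos).analyticAt_of_mem ?_
    rw [Metric.mem_eball, edist_zero_right]
    rw [Metric.mem_ball, dist_zero_right, ← coe_nnnorm, NNReal.coe_lt_coe] at hy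
    refine ((ENNReal.coe_lt_coe.2 hy).trans hερ).trans_le ?_
    exact (min_le_right _ _).trans hqrad
  · intro y hy
    refine hkey y ?_
    rw [Metric.mem_ball, dist_zero_right, ← coe_nnnorm, NNReal.coe_lt_coe] at hy
    exact (ENNReal.coe_lt_coe.2 hy).trans hερ

lemma vanish_at_zero (f : ℝ → ℝ) (hf : ContinuousAt f 0)
    (h : ∀ᶠ t in 𝓝[≠] (0:ℝ), f t = 0) : f 0 = 0 := by
  have h1 : Filter.Tendsto f (𝓝[≠] (0:ℝ)) (𝓝 (f 0)) :=
    (hf.continuousWithinAt (s := {(0:ℝ)}ᶜ)).tendsto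
  have h2 : Filter.Tendsto f (𝓝[≠] (0:ℝ)) (𝓝 0) :=
    Filter.Tendsto.congr' (h.mono fun t ht => ht.symm) tendsto_const_nhds
  exact tendsto_nhds_unique h1 h2

/-- If `H₁, H₂ : ℝ² → ℝ` are real-analytic and
`y₂ H₁(y₁,y₂) = y₁ H₂(y₁,y₂)` everywhere, then there is a real-analytic `H̃` with
`H₁ = y₁ H̃` and `H₂ = y₂ H̃`. -/
theorem analytic_common_factor
    (H₁ H₂ : ℝ × ℝ → ℝ)
    (h₁ : ∀ p : ℝ × ℝ, AnalyticAt ℝ H₁ p)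
    (h₂ : ∀ p : ℝ × ℝ, AnalyticAt ℝ H₂ p)
    (hrel : ∀ p : ℝ × ℝ, p.2 * H₁ p = p.1 * H₂ p) :
    ∃ Htilde : ℝ × ℝ → ℝ, (∀ p : ℝ × ℝ, AnalyticAt ℝ Htilde p) ∧
      ∀ p : ℝ × ℝ, H₁ p = p.1 * Htilde p ∧ H₂ p = p.2 * Htilde p := by
  have hH10 : ∀ y : ℝ × ℝ, y.1 = 0 → H₁ y = 0 := by
    rintro ⟨a, b⟩ ha
    dsimp only at ha
    subst ha
    by_cases hb : b = 0
    · subst hb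
      refine vanish_at_zero (fun t => H₁ (0, t)) ?_ ?_
      · exact (h₁ ((0:ℝ), (0:ℝ))).continuousAt.comp (f := fun t : ℝ => (((0:ℝ), t) : ℝ × ℝ)) (by fun_prop)
      · filter_upwards [self_mem_nhdsWithin] with t ht
        have := hrel ((0:ℝ), t)
        simp only [zero_mul] at this
        exact (mul_eq_zero.1 this).resolve_left ht
    · have := hrel ((0:ℝ), b)
      simp only [zero_mul] at this
      exact (mul_eq_zero.1 this).resolve_left hb
  have hH20 : ∀ y : ℝ × ℝ, y.2 = 0 → H₂ y = 0 := by
    rintro ⟨a, b⟩ hb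
    dsimp only at hb
    subst hb
    by_cases ha : a = 0
    · subst ha
      refine vanish_at_zero (fun t => H₂ (t, 0)) ?_ ?_
      · exact (h₂ ((0:ℝ), (0:ℝ))).continuousAt.comp (f := fun t : ℝ => ((t, (0:ℝ)) : ℝ × ℝ)) (by fun_prop)
      · filter_upwards [self_mem_nhdsWithin] with t ht
        have := hrel (t, (0:ℝ))
        simp only [zero_mul] at this
        exact (mul_eq_zero.1 this.symm).resolve_left ht
    · have := hrel (a, (0:ℝ))
      simp only [zero_mul] at this
      exact (mul_eq_zero.1 this.symm).resolve_left ha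
  obtain ⟨S, ε, hε0, hSa, hSeq⟩ := key H₁ (h₁ 0) hH10
  have hSH2 : ∀ y ∈ Metric.ball (0 : ℝ × ℝ) ε, H₂ y = y.2 * S y := by
    intro y hy
    by_cases hy1 : y.1 = 0
    · obtain ⟨a, b⟩ := y
      dsimp only at hy1
      subst hy1
      have hv : (fun t => H₂ (t, b) - b * S (t, b)) 0 = 0 := by
        refine vanish_at_zero (fun t => H₂ (t, b) - b * S (t, b)) ?_ ?_
        · have hc1 : ContinuousAt (fun t : ℝ => H₂ (t, b)) 0 :=
            (h₂ ((0:ℝ), b)).continuousAt.comp (f := fun t : ℝ => ((t, b) : ℝ × ℝ)) (by fun_prop)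
          have hc2 : ContinuousAt (fun t : ℝ => S (t, b)) 0 :=
            (hSa ((0:ℝ), b) hy).continuousAt.comp
              (f := fun t : ℝ => ((t, b) : ℝ × ℝ)) (by fun_prop)
          exact hc1.sub (continuousAt_const.mul hc2)
        · have hc : ContinuousAt (fun t : ℝ => ((t, b) : ℝ × ℝ)) 0 := by fun_prop
          have hball : ∀ᶠ t in 𝓝 (0:ℝ), ((t, b) : ℝ × ℝ) ∈ Metric.ball (0 : ℝ×ℝ) ε :=
            hc.eventually_mem (Metric.isOpen_ball.mem_nhds hy)
          refine ((eventually_nhdsWithin_of_eventually_nhds hball).and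
            self_mem_nhdsWithin).mono ?_
          rintro t ⟨htball, ht0⟩
          have hb1 : H₁ (t, b) = t * S (t, b) := hSeq _ htball
          have hb2 := hrel (t, b)
          dsimp only at hb2
          have hc3 : t * H₂ (t, b) = t * (b * S (t, b)) := by rw [← hb2, hb1]; ring
          have := mul_left_cancel₀ ht0 hc3
          linarith
      dsimp only at hv
      dsimp only
      linarith
    · have ha1 : H₁ y = y.1 * S y := hSeq y hy
      have ha2 := hrel y
      have : y.1 * H₂ y = y.1 * (y.2 * S y) := by rw [← ha2, ha1]; ring
      exact mul_left_cancel₀ hy1 this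
  classical
  refine ⟨fun y => if y.1 = 0 then (if y.2 = 0 then S y else H₂ y / y.2) else H₁ y / y.1, ?_, ?_⟩
  · intro y
    by_cases hy1 : y.1 = 0
    · by_cases hy2 : y.2 = 0
      · have hy0 : y = (0 : ℝ × ℝ) := Prod.ext_iff.2 ⟨hy1, hy2⟩
        subst hy0
        refine (hSa 0 (Metric.mem_ball_self hε0)).congr ?_
        filter_upwards [Metric.ball_mem_nhds (0:ℝ×ℝ) hε0] with z hz
        by_cases hz1 : z.1 = 0
        · by_cases hz2 : z.2 = 0
          · simp only [if_pos hz1, if_pos hz2]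
          · have hzz := hSH2 z hz
            simp only [if_pos hz1, if_neg hz2, hzz]
            field_simp
        · have hzz := hSeq z hz
          simp only [if_neg hz1, hzz]
          field_simp
      · refine ((h₂ y).div analyticAt_snd hy2).congr ?_
        have hev : ∀ᶠ z in 𝓝 y, z.2 ≠ 0 := continuous_snd.continuousAt.eventually_ne hy2
        filter_upwards [hev] with z hz2
        by_cases hz1 : z.1 = 0
        · simp only [if_pos hz1, if_neg hz2, Pi.div_apply]
        · simp only [if_neg hz1, Pi.div_apply]
          have hz3 := hrel z
          rw [div_eq_div_iff hz2 hz1]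
          linarith
    · refine ((h₁ y).div analyticAt_fst hy1).congr ?_
      have hev : ∀ᶠ z in 𝓝 y, z.1 ≠ 0 := continuous_fst.continuousAt.eventually_ne hy1
      filter_upwards [hev] with z hz1
      simp only [if_neg hz1, Pi.div_apply]
  · intro y
    constructor
    · by_cases hy1 : y.1 = 0
      · rw [hy1, hH10 y hy1, zero_mul]
      · simp only [if_neg hy1]
        field_simp
    · by_cases hy2 : y.2 = 0
      · rw [hy2, hH20 y hy2, zero_mul]
      · by_cases hy1 : y.1 = 0
        · simp only [if_pos hy1, if_neg hy2]
          field_simp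
        · simp only [if_neg hy1]
          have h2 := hrel y
          field_simp
          linarith
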